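/- The homomorphism φ₀ : A[Ã_n] → A[B_{n+1}] sending t_i to r_i (1 ≤ i ≤ n) and t_0 to ρ r_n ρ^{-1} has image exactly equal to the kernel of ξ : A[B_{n+1}] → ℤ. -/

import Mathlib

/-- Defining relations of the Artin group of type `B_{n+1}` on generators indexed by
`Fin (n+1)`; index `i` represents the paper's generator `r_{i+1}`. -/
def BRels (n : ℕ) : Set (FreeGroup (Fin (n + 1))) :=
  { x | ∃ i j : Fin (n + 1), (i : ℕ) + 1 = j ∧ (j : ℕ) < n ∧
      x = .of i * .of j * .of i * (.of j * .of i * .of j)⁻¹ } ∪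
  { x | n ≥ 1 ∧ x = .of (⟨n - 1, by omega⟩ : Fin (n + 1)) * .of ⟨n, by omega⟩ *
      .of ⟨n - 1, by omega⟩ * .of ⟨n, by omega⟩ *
      (.of (⟨n, by omega⟩ : Fin (n + 1)) * .of ⟨n - 1, by omega⟩ *
        .of ⟨n, by omega⟩ * .of ⟨n - 1, by omega⟩)⁻¹ } ∪
  { x | ∃ i j : Fin (n + 1), (i : ℕ) + 2 ≤ j ∧ x = .of i * .of j * (.of j * .of i)⁻¹ }

/-- The Artin group of type `B_{n+1}`. -/
abbrev ArtinB (n : ℕ) := PresentedGroup (BRels n)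

/-- The standard generator `r_{i+1}` of `A[B_{n+1}]`. -/
def rB (n : ℕ) (i : Fin (n + 1)) : ArtinB n := PresentedGroup.of i

/-- `ρ = r_1 r_2 ⋯ r_{n+1}`. -/
def ρB (n : ℕ) : ArtinB n := (List.ofFn fun i => rB n i).prod

/-- Defining relations of the Euclidean braid group `A[Ã_n]` on generators `t_0, …, t_n`
indexed cyclically by `Fin (n+1)`. -/
def ARels (n : ℕ) : Set (FreeGroup (Fin (n + 1))) :=
  { x | ∃ i : Fin (n + 1), x = .of i * .of (i + 1) * .of i *
      (.of (i + 1) * .of i * .of (i + 1))⁻¹ } ∪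
  { x | ∃ i j : Fin (n + 1), j ≠ i + 1 ∧ i ≠ j + 1 ∧ i ≠ j ∧
      x = .of i * .of j * (.of j * .of i)⁻¹ }

/-- The Euclidean braid group `A[Ã_n]`. -/
abbrev ArtinA (n : ℕ) := PresentedGroup (ARels n)

/-- The standard generator `t_i` of `A[Ã_n]`. -/
def tA (n : ℕ) (i : Fin (n + 1)) : ArtinA n := PresentedGroup.of i

/-- `r_0, r_1, …, r_n` in `A[B_{n+1}]`: for `i ≥ 1` this is the standard generator `r_i`,
and `r_0 = ρ r_n ρ⁻¹`. -/
def rcyc (n : ℕ) (i : Fin (n + 1)) : ArtinB n :=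
  if h : (i : ℕ) = 0 then ρB n * rB n ⟨n - 1, by omega⟩ * (ρB n)⁻¹
  else rB n ⟨(i : ℕ) - 1, by omega⟩

-- relations hold
lemma relB {n : ℕ} {r : FreeGroup (Fin (n+1))} (hr : r ∈ BRels n) :
    PresentedGroup.mk (BRels n) r = 1 := by
  have : r ∈ Subgroup.normalClosure (BRels n) := Subgroup.subset_normalClosure hr
  exact (QuotientGroup.eq_one_iff r).mpr this

lemma rB_eq_mk {n : ℕ} (i : Fin (n+1)) :
    rB n i = PresentedGroup.mk (BRels n) (FreeGroup.of i) := rfl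

/-- `s k` is the `k`-th generator, junk value `1` if `k > n`. -/
def sB (n : ℕ) (k : ℕ) : ArtinB n := if h : k ≤ n then rB n ⟨k, by omega⟩ else 1

lemma sB_eq {n k : ℕ} (h : k ≤ n) : sB n k = rB n ⟨k, by omega⟩ := dif_pos h

lemma braidB {n : ℕ} (k : ℕ) (h : k + 1 < n) :
    sB n k * sB n (k+1) * sB n k = sB n (k+1) * sB n k * sB n (k+1) := by
  rw [sB_eq (by omega : k ≤ n), sB_eq (by omega : k + 1 ≤ n)]
  have hr := relB (n := n) (r := .of (⟨k, by omega⟩ : Fin (n+1)) * .of ⟨k+1, by omega⟩ *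
      .of ⟨k, by omega⟩ * (.of ⟨k+1, by omega⟩ * .of ⟨k, by omega⟩ * .of ⟨k+1, by omega⟩)⁻¹)
      (Or.inl (Or.inl ⟨⟨k, by omega⟩, ⟨k+1, by omega⟩, rfl, by simpa using h, rfl⟩))
  simp only [map_mul, map_inv, ← rB_eq_mk, mul_inv_eq_one] at hr
  exact hr

lemma commB {n : ℕ} (k l : ℕ) (h : k + 2 ≤ l) (hl : l ≤ n) :
    sB n k * sB n l = sB n l * sB n k := by
  rw [sB_eq (by omega : k ≤ n), sB_eq hl]
  have hr := relB (n := n) (r := .of (⟨k, by omega⟩ : Fin (n+1)) * .of ⟨l, by omega⟩ *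
      (.of (⟨l, by omega⟩ : Fin (n+1)) * .of ⟨k, by omega⟩)⁻¹)
      (Or.inr ⟨⟨k, by omega⟩, ⟨l, by omega⟩, by simpa using h, rfl⟩)
  simp only [map_mul, map_inv, ← rB_eq_mk, mul_inv_eq_one] at hr
  exact hr

lemma b4B {n : ℕ} (h : 1 ≤ n) :
    sB n (n-1) * sB n n * sB n (n-1) * sB n n = sB n n * sB n (n-1) * sB n n * sB n (n-1) := by
  rw [sB_eq (by omega : n - 1 ≤ n), sB_eq (le_refl n)]
  have hr := relB (n := n) (r := .of (⟨n-1, by omega⟩ : Fin (n+1)) * .of ⟨n, by omega⟩ *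
      .of ⟨n-1, by omega⟩ * .of ⟨n, by omega⟩ *
      (.of (⟨n, by omega⟩ : Fin (n+1)) * .of ⟨n-1, by omega⟩ * .of ⟨n, by omega⟩ *
        .of ⟨n-1, by omega⟩)⁻¹) (Or.inl (Or.inr ⟨h, rfl⟩))
  simp only [map_mul, map_inv, ← rB_eq_mk, mul_inv_eq_one] at hr
  exact hr

/-- `QB n m = s_0 s_1 ⋯ s_{m-1}`. -/
def QB (n : ℕ) : ℕ → ArtinB n
  | 0 => 1
  | m+1 => QB n m * sB n m

/-- `TB n c = s_1 s_2 ⋯ s_c`. -/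
def TB (n : ℕ) : ℕ → ArtinB n
  | 0 => 1
  | c+1 => TB n c * sB n (c+1)

lemma QB_succ (n m : ℕ) : QB n (m+1) = QB n m * sB n m := rfl

lemma ρB_eq_QB (n : ℕ) : ρB n = QB n (n+1) := by
  have key : ∀ m, m ≤ n + 1 → (List.ofFn fun i : Fin m => sB n i).prod = QB n m := by
    intro m
    induction m with
    | zero => intro _; simp [QB]
    | succ m ih =>
      intro hm
      rw [List.ofFn_succ', List.concat_eq_append, List.prod_append]
      simp only [List.prod_cons, List.prod_nil, mul_one, Fin.coe_castSucc, Fin.val_last]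
      rw [ih (by omega), QB_succ]
  have h2 : (fun i : Fin (n+1) => rB n i) = fun i : Fin (n+1) => sB n i := by
    funext i
    rw [sB_eq (by omega : (i : ℕ) ≤ n)]
  rw [ρB, h2, key (n+1) le_rfl]

lemma commQ {n : ℕ} : ∀ c j, c + 1 ≤ j → j ≤ n → QB n c * sB n j = sB n j * QB n c := by
  intro c
  induction c with
  | zero => intro j _ _; simp [QB]
  | succ c ih =>
    intro j hj hjn
    rw [QB_succ, mul_assoc, commB c j (by omega) hjn, ← mul_assoc, ih j (by omega) hjn,
      mul_assoc]

lemma shiftQ {n : ℕ} : ∀ m a, a + 2 ≤ m → m ≤ n + 1 → a + 1 < n →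
    QB n m * sB n a = sB n (a+1) * QB n m := by
  intro m
  induction m with
  | zero => omega
  | succ m ih =>
    intro a ham hm han
    rcases Nat.lt_or_ge (a+2) (m+1) with hlt | hge
    · -- m ≥ a+2, use commutation of s_m with s_a then IH
      rw [QB_succ, mul_assoc, (commB a m (by omega) (by omega)).symm, ← mul_assoc,
        ih a (by omega) (by omega) han, mul_assoc]
    · -- m+1 = a+2
      have hma : m = a + 1 := by omega
      subst hma
      -- QB (a+2) = QB a * s a * s (a+1)
      rw [QB_succ, QB_succ, mul_assoc, mul_assoc, ← mul_assoc (sB n a),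
        braidB a (by omega), ← mul_assoc, ← mul_assoc,
        commQ a (a+1) (by omega) (by omega), mul_assoc, mul_assoc, mul_assoc]

lemma s0T {n : ℕ} (hn : 0 < n) : ∀ c, sB n 0 * TB n c = QB n (c+1) := by
  intro c
  induction c with
  | zero => simp [TB, QB]
  | succ c ih => rw [TB, ← mul_assoc, ih, ← QB_succ]

lemma vQ {n : ℕ} : ∀ c, c ≤ n - 2 → 2 ≤ n →
    QB n (n-1) * QB n c = TB n c * QB n (n-1) := by
  intro c
  induction c with
  | zero => intro _ _; simp [QB, TB]
  | succ c ih =>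
    intro hc hn
    rw [QB_succ, ← mul_assoc, ih (by omega) hn, mul_assoc,
      shiftQ (n-1) c (by omega) (by omega) (by omega), ← mul_assoc, ← TB]

private lemma swapl {G : Type*} [Group G] {p q : G} (h : p * q = q * p) (x : G) :
    p * (q * x) = q * (p * x) := by rw [← mul_assoc, h, mul_assoc]

lemma claimA {n : ℕ} (a : ℕ) (h : a + 1 < n) :
    ρB n * sB n a = sB n (a+1) * ρB n := by
  rw [ρB_eq_QB]
  exact shiftQ (n+1) a (by omega) (by omega) h

lemma claimB {n : ℕ} (hn : 2 ≤ n) :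
    ρB n * ρB n * sB n (n-1) = sB n 0 * (ρB n * ρB n) := by
  obtain ⟨m, rfl⟩ : ∃ m, n = m + 2 := ⟨n - 2, by omega⟩
  set N := m + 2 with hN
  set v : ArtinB N := QB N (m+1) with hvdef
  set w : ArtinB N := QB N m with hwdef
  set a : ArtinB N := sB N (m+1) with hadef
  set b : ArtinB N := sB N (m+2) with hbdef
  set c : ArtinB N := sB N m with hcdef
  have hρ : ρB N = v * a * b := by
    rw [ρB_eq_QB]; rfl
  have hbv : ∀ x, b * (v * x) = v * (b * x) :=
    swapl ((commQ (m+1) (m+2) le_rfl le_rfl).symm)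
  have hb4 : b * (a * (b * a)) = a * (b * (a * b)) := by
    have h4 := b4B (n := N) (by omega)
    simp only [← mul_assoc]
    exact h4.symm
  have hav : ∀ x, a * (v * x) = w * (a * (c * x)) := by
    intro x
    have h1 : v * x = w * (c * x) := by rw [← mul_assoc]; rfl
    rw [h1, swapl ((commQ m (m+1) le_rfl (by omega)).symm)]
  have hbr : ∀ x, a * (c * (a * x)) = c * (a * (c * x)) := by
    intro x
    have h3 := (braidB (n := N) m (by omega)).symm
    simp only [← mul_assoc]
    rw [h3]
  have hwc : ∀ x, w * (c * x) = v * x := by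
    intro x; rw [← mul_assoc]; rfl
  have hvw : v * w = TB N m * v := vQ m (by omega) (by omega)
  have hs0T : sB N 0 * TB N m = QB N (m+1) := s0T (by omega) m
  have hkey : sB N 0 * v * w = v * v := by
    rw [mul_assoc, hvw, ← mul_assoc, hs0T]
  have hsub : ∀ x, sB N 0 * (v * (w * x)) = v * (v * x) := by
    intro x
    calc sB N 0 * (v * (w * x)) = sB N 0 * v * w * x := by simp only [mul_assoc]
      _ = v * v * x := by rw [hkey]
      _ = v * (v * x) := by simp only [mul_assoc]
  show ρB N * ρB N * sB N (N - 1) = sB N 0 * (ρB N * ρB N)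
  have hNa : sB N (N - 1) = a := rfl
  rw [hNa, hρ]
  simp only [mul_assoc]
  rw [hbv, hbv, hb4, hav, hav, hbr, hwc, hsub]

lemma keyrel {n : ℕ} (hn : 2 ≤ n) (i : Fin (n + 1)) :
    ρB n * rcyc n i * (ρB n)⁻¹ = rcyc n (i + 1) := by
  have hval : ((i + 1 : Fin (n+1)) : ℕ) = ((i : ℕ) + 1) % (n + 1) := by
    have h11 : (1:ℕ) % (n+1) = 1 := Nat.mod_eq_of_lt (by omega)
    rw [Fin.val_add, Fin.val_one', h11]
  by_cases h0 : (i : ℕ) = 0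
  · have h1 : ((i + 1 : Fin (n+1)) : ℕ) = 1 := by
      rw [hval, h0]
      exact Nat.mod_eq_of_lt (by omega)
    rw [rcyc, dif_pos h0, rcyc, dif_neg (show ¬((i + 1 : Fin (n+1)) : ℕ) = 0 by rw [h1]; omega)]
    have h2 : rB n ⟨((i + 1 : Fin (n+1)) : ℕ) - 1, by omega⟩ = sB n 0 := by
      rw [sB_eq (show (0:ℕ) ≤ n by omega)]
      congr 1
      exact Fin.ext (show ((i + 1 : Fin (n+1)) : ℕ) - 1 = 0 by rw [h1])
    rw [h2]
    have h3 : rB n (⟨n - 1, by omega⟩ : Fin (n+1)) = sB n (n-1) :=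
      (sB_eq (show n - 1 ≤ n by omega)).symm
    rw [h3]
    have hB := claimB hn
    calc ρB n * (ρB n * sB n (n-1) * (ρB n)⁻¹) * (ρB n)⁻¹
        = (ρB n * ρB n * sB n (n-1)) * (ρB n * ρB n)⁻¹ := by group
      _ = (sB n 0 * (ρB n * ρB n)) * (ρB n * ρB n)⁻¹ := by rw [hB]
      _ = sB n 0 := by group
  · by_cases hlast : (i : ℕ) = n
    · have h1 : ((i + 1 : Fin (n+1)) : ℕ) = 0 := by
        rw [hval, hlast]
        simp
      have h4 : (⟨(i : ℕ) - 1, by omega⟩ : Fin (n+1)) = ⟨n - 1, by omega⟩ :=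
        Fin.ext (show (i : ℕ) - 1 = n - 1 by omega)
      rw [rcyc, dif_neg h0, rcyc, dif_pos h1, h4]
    · have hkn : (i : ℕ) < n := by
        have := i.isLt; omega
      have h1 : ((i + 1 : Fin (n+1)) : ℕ) = (i : ℕ) + 1 := by
        rw [hval]
        exact Nat.mod_eq_of_lt (by omega)
      rw [rcyc, dif_neg h0, rcyc, dif_neg (show ¬((i + 1 : Fin (n+1)) : ℕ) = 0 by rw [h1]; omega)]
      have h2 : rB n ⟨(i : ℕ) - 1, by omega⟩ = sB n ((i : ℕ) - 1) :=
        (sB_eq (show (i : ℕ) - 1 ≤ n by omega)).symm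
      have h3 : rB n ⟨((i + 1 : Fin (n+1)) : ℕ) - 1, by omega⟩ = sB n (i : ℕ) := by
        rw [sB_eq (show (i : ℕ) ≤ n by omega)]
        congr 1
        exact Fin.ext (show ((i + 1 : Fin (n+1)) : ℕ) - 1 = (i : ℕ) by rw [h1]; omega)
      rw [h2, h3]
      have hA := claimA (n := n) ((i : ℕ) - 1) (by omega)
      rw [show (i : ℕ) - 1 + 1 = (i : ℕ) by omega] at hA
      rw [hA]
      group

open scoped Pointwise

/-- The image of `φ₀ : A[Ã_n] → A[B_{n+1}]` is exactly `ker ξ`. -/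
theorem stmt7 (n : ℕ) (hn : 2 ≤ n)
    (ξ : ArtinB n →* Multiplicative ℤ)
    (hξ : ∀ i : Fin (n + 1), ξ (rB n i) = Multiplicative.ofAdd (if (i : ℕ) = n then 1 else 0))
    (φ₀ : ArtinA n →* ArtinB n) (hφ : ∀ i : Fin (n + 1), φ₀ (tA n i) = rcyc n i) :
    φ₀.range = ξ.ker := by
  set H : Subgroup (ArtinB n) := Subgroup.closure (Set.range (rcyc n)) with hH
  -- the range of φ₀ is the subgroup generated by the rcyc's
  have hrange : φ₀.range = H := by
    rw [MonoidHom.range_eq_map, ← PresentedGroup.closure_range_of (ARels n),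
      MonoidHom.map_closure]
    congr 1
    rw [← Set.range_comp]
    have : φ₀ ∘ (PresentedGroup.of : Fin (n+1) → ArtinA n) = rcyc n := funext hφ
    rw [this]
  have hmemH : ∀ i : Fin (n+1), rcyc n i ∈ H :=
    fun i => Subgroup.subset_closure (Set.mem_range_self i)
  have hsBH : ∀ k, k < n → sB n k ∈ H := by
    intro k hk
    have h1 : sB n k = rcyc n ⟨k+1, by omega⟩ := by
      rw [sB_eq (by omega : k ≤ n), rcyc,
        dif_neg (show ¬((⟨k+1, by omega⟩ : Fin (n+1)) : ℕ) = 0 by simp)]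
      rfl
    rw [h1]
    exact hmemH _
  have hQH : ∀ m, m ≤ n → QB n m ∈ H := by
    intro m
    induction m with
    | zero => intro _; exact one_mem H
    | succ m ih =>
      intro hm
      rw [QB_succ]
      exact mul_mem (ih (by omega)) (hsBH m (by omega))
  have hρeq : ρB n = QB n n * sB n n := by rw [ρB_eq_QB, QB_succ]
  -- every element lies in any subgroup containing H and ρ
  have hgen : ∀ K : Subgroup (ArtinB n), H ≤ K → ρB n ∈ K → ∀ x, x ∈ K := by
    intro K hHK hρK x
    refine PresentedGroup.generated_by _ K ?_ x
    intro j
    by_cases hj : (j : ℕ) < n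
    · have h1 : sB n (j : ℕ) = PresentedGroup.of j := sB_eq (by omega)
      rw [← h1]
      exact hHK (hsBH _ hj)
    · have hj' : j = (⟨n, by omega⟩ : Fin (n+1)) := Fin.ext (show (j : ℕ) = n by omega)
      have h1 : (PresentedGroup.of j : ArtinB n) = sB n n := by
        rw [hj']
        exact (sB_eq le_rfl).symm
      have h2 : (PresentedGroup.of j : ArtinB n) = (QB n n)⁻¹ * ρB n := by
        rw [h1, hρeq, ← mul_assoc, inv_mul_cancel, one_mul]
      rw [h2]
      exact mul_mem (inv_mem (hHK (hQH n le_rfl))) hρK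
  -- conjugation by ρ and ρ⁻¹ preserves H
  have hconj : ∀ x ∈ H, ρB n * x * (ρB n)⁻¹ ∈ H := by
    intro x hx
    induction hx using Subgroup.closure_induction with
    | mem y hy =>
      obtain ⟨i, rfl⟩ := hy
      rw [keyrel hn i]
      exact hmemH _
    | one => simpa using one_mem H
    | mul y z hy hz ihy ihz =>
      have h : ρB n * (y * z) * (ρB n)⁻¹ = (ρB n * y * (ρB n)⁻¹) * (ρB n * z * (ρB n)⁻¹) := by
        group
      rw [h]; exact mul_mem ihy ihz
    | inv y hy ihy =>
      have h : ρB n * y⁻¹ * (ρB n)⁻¹ = (ρB n * y * (ρB n)⁻¹)⁻¹ := by group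
      rw [h]; exact inv_mem ihy
  have hconj' : ∀ x ∈ H, (ρB n)⁻¹ * x * ρB n ∈ H := by
    intro x hx
    induction hx using Subgroup.closure_induction with
    | mem y hy =>
      obtain ⟨i, rfl⟩ := hy
      have h := keyrel hn (i - 1)
      rw [sub_add_cancel] at h
      have h2 : (ρB n)⁻¹ * rcyc n i * ρB n = rcyc n (i - 1) := by
        rw [← h]; group
      rw [h2]
      exact hmemH _
    | one => simpa using one_mem H
    | mul y z hy hz ihy ihz =>
      have h : (ρB n)⁻¹ * (y * z) * ρB n =
          ((ρB n)⁻¹ * y * ρB n) * ((ρB n)⁻¹ * z * ρB n) := by group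
      rw [h]; exact mul_mem ihy ihz
    | inv y hy ihy =>
      have h : (ρB n)⁻¹ * y⁻¹ * ρB n = ((ρB n)⁻¹ * y * ρB n)⁻¹ := by group
      rw [h]; exact inv_mem ihy
  -- H is normal
  have hρnorm : ρB n ∈ Subgroup.normalizer (H : Set (ArtinB n)) := by
    rw [Subgroup.mem_normalizer_iff]
    intro h
    constructor
    · intro hh; exact hconj h hh
    · intro hh
      have h1 : h = (ρB n)⁻¹ * (ρB n * h * (ρB n)⁻¹) * ρB n := by group
      rw [h1]
      exact hconj' _ hh
  have hnormtop : Subgroup.normalizer (H : Set (ArtinB n)) = ⊤ := by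
    rw [eq_top_iff]
    intro x _
    exact hgen (Subgroup.normalizer (H : Set (ArtinB n))) Subgroup.le_normalizer hρnorm x
  haveI hNormal : H.Normal := Subgroup.normalizer_eq_top_iff.mp hnormtop
  -- H is contained in ker ξ
  have hξconj : ∀ x : ArtinB n, ξ (ρB n * x * (ρB n)⁻¹) = ξ x := by
    intro x
    rw [map_mul, map_mul, map_inv, mul_comm (ξ (ρB n)), mul_assoc, mul_inv_cancel, mul_one]
  have hkerH : H ≤ ξ.ker := by
    rw [hH, Subgroup.closure_le]
    rintro y ⟨i, rfl⟩
    simp only [SetLike.mem_coe, MonoidHom.mem_ker]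
    rw [rcyc]
    by_cases h0 : (i : ℕ) = 0
    · rw [dif_pos h0, hξconj, hξ]
      simp only [if_neg (show ¬((⟨n-1, by omega⟩ : Fin (n+1)) : ℕ) = n by simp; omega)]
      rfl
    · rw [dif_neg h0, hξ]
      simp only [if_neg (show ¬((⟨(i:ℕ)-1, by omega⟩ : Fin (n+1)) : ℕ) = n by
        simp; omega)]
      rfl
  -- ξ ρ = 1
  have hξQ : ∀ m, m ≤ n → ξ (QB n m) = 1 := by
    intro m
    induction m with
    | zero => intro _; exact map_one ξ
    | succ m ih =>
      intro hm
      rw [QB_succ, map_mul, ih (by omega), one_mul, sB_eq (by omega : m ≤ n), hξ]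
      simp only [if_neg (show ¬((⟨m, by omega⟩ : Fin (n+1)) : ℕ) = n by simp; omega)]
      rfl
  have hξρ : ξ (ρB n) = Multiplicative.ofAdd 1 := by
    rw [hρeq, map_mul, hξQ n le_rfl, one_mul, sB_eq le_rfl, hξ]
    simp
  -- conclusion
  apply le_antisymm
  · rw [hrange]; exact hkerH
  · intro g hg
    have hgtop : g ∈ H ⊔ Subgroup.zpowers (ρB n) :=
      hgen _ le_sup_left (Subgroup.mem_sup_right (Subgroup.mem_zpowers _)) g
    have hset : g ∈ (H : Set (ArtinB n)) * (Subgroup.zpowers (ρB n) : Set (ArtinB n)) := by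
      rw [← Subgroup.normal_mul]
      exact hgtop
    obtain ⟨h, hh, k, hk, rfl⟩ := hset
    obtain ⟨m, rfl⟩ := Subgroup.mem_zpowers_iff.mp hk
    have hξg : ξ (h * ρB n ^ m) = 1 := hg
    rw [map_mul, hkerH hh, one_mul, map_zpow, hξρ] at hξg
    have hm : m = 0 := by
      have := congrArg Multiplicative.toAdd hξg
      simpa using this
    subst hm
    rw [hrange]
    simpa using hh
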